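/- (Theorem 3) Let X be a variable with parent set U (X ∉ U) and let f be a functional CPT for X over {X} ∪ U. Let G be a factor over a variable set Y ⊇ {X} ∪ U of the form G = f · G₀ for some factor G₀ (i.e., the product G contains f as a multiplicand), and let H be a factor over a variable set W ⊇ {X} ∪ U of the form H = f · H₀ for some factor H₀. Then G · H = G · (∑_X H) as factors over Y ∪ W. -/

import Mathlib

/-- An instantiation of the variables in `S`, where variable `i` has value set `V i`. -/
abbrev Inst {ι : Type*} (V : ι → Type*) (S : Finset ι) : Type _ :=
  ∀ i : S, V i

/-- Restrict an instantiation of `T` to a subset `S ⊆ T`. -/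
def Inst.restrict {ι : Type*} {V : ι → Type*} {S T : Finset ι} (h : S ⊆ T)
    (z : Inst V T) : Inst V S :=
  fun i => z ⟨i, h i.2⟩

/-- Transport an instantiation along an equality of variable sets. -/
def Inst.cast {ι : Type*} {V : ι → Type*} {S T : Finset ι} (h : S = T)
    (z : Inst V S) : Inst V T :=
  fun i => z ⟨i, h.symm ▸ i.2⟩

/-- Extend an instantiation `u` of `U` with a value `x` for the variable `X`,
yielding an instantiation of `insert X U`. -/
def Inst.consX {ι : Type*} [DecidableEq ι] {V : ι → Type*} {U : Finset ι} (X : ι)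
    (x : V X) (u : Inst V U) : Inst V (insert X U) :=
  fun i => if h : (i : ι) = X then _root_.cast (congrArg V h).symm x
           else u ⟨i, (Finset.mem_insert.mp i.2).resolve_left h⟩

/-- Extend an instantiation `w` of `W \ {X}` with a value `x` for `X ∈ W`,
yielding an instantiation of `W`. -/
def Inst.extendAt {ι : Type*} [DecidableEq ι] {V : ι → Type*} {W : Finset ι} (X : ι)
    (_hX : X ∈ W) (x : V X) (w : Inst V (W \ {X})) : Inst V W :=
  fun i => if h : (i : ι) = X then _root_.cast (congrArg V h).symm x
           else w ⟨i, Finset.mem_sdiff.mpr ⟨i.2, Finset.notMem_singleton.mpr h⟩⟩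

/-- The product of a factor over `S` and a factor over `T` is a factor over `S ∪ T`. -/
def Factor.mul {ι : Type*} [DecidableEq ι] {V : ι → Type*} {S T : Finset ι}
    (f : Inst V S → ℝ) (g : Inst V T → ℝ) : Inst V (S ∪ T) → ℝ :=
  fun z => f (fun i => z ⟨i, Finset.mem_union_left _ i.2⟩) *
           g (fun i => z ⟨i, Finset.mem_union_right _ i.2⟩)

/-- Summing out the variables `Y ⊆ S` from a factor over `S` yields a factor over `S \ Y`. -/
noncomputable def Factor.sumOut {ι : Type*} [DecidableEq ι] {V : ι → Type*}
    [∀ i, Fintype (V i)] {S : Finset ι} (Y : Finset ι) (_hY : Y ⊆ S)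
    (f : Inst V S → ℝ) : Inst V (S \ Y) → ℝ :=
  fun z => ∑ y : Inst V Y, f fun i =>
    if h : (i : ι) ∈ Y then y ⟨i, h⟩ else z ⟨i, Finset.mem_sdiff.mpr ⟨i.2, h⟩⟩

/-- **Theorem 3 of the paper.** Let `f` be a functional CPT for variable `X`
with parents `U`. If the products `G` (over `Y ⊇ {X} ∪ U`) and `H` (over `W ⊇ {X} ∪ U`)
both contain `f` as a multiplicand, then `G · H = G · (∑_X H)` as factors over `Y ∪ W`. -/
theorem mul_eq_mul_sumOut_of_functional {ι : Type*} [DecidableEq ι] (V : ι → Type*)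
    [∀ i, Fintype (V i)] [∀ i, Nonempty (V i)]
    (X : ι) (U : Finset ι) (hXU : X ∉ U)
    (f : Inst V (insert X U) → ℝ)
    (hcpt : ∀ u : Inst V U, ∑ x : V X, f (Inst.consX X x u) = 1)
    (hfun : ∀ (x : V X) (u : Inst V U),
      f (Inst.consX X x u) = 0 ∨ f (Inst.consX X x u) = 1)
    (Y W : Finset ι) (hY : insert X U ⊆ Y) (hW : insert X U ⊆ W)
    (G : Inst V Y → ℝ) (H : Inst V W → ℝ)
    (G₀ : Inst V Y → ℝ) (hG : ∀ z : Inst V Y, G z = f (Inst.restrict hY z) * G₀ z)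
    (H₀ : Inst V W → ℝ) (hH : ∀ z : Inst V W, H z = f (Inst.restrict hW z) * H₀ z) :
    ∀ z : Inst V (Y ∪ W),
      Factor.mul G H z
        = Factor.mul G
            (Factor.sumOut {X} (Finset.singleton_subset_iff.mpr (hW (Finset.mem_insert_self X U))) H)
            (Inst.cast
              (by
                have hXY : X ∈ Y := hY (Finset.mem_insert_self X U)
                ext a
                simp only [Finset.mem_union, Finset.mem_sdiff, Finset.mem_singleton]
                constructor
                · rintro (h | h)
                  · exact Or.inl h
                  · by_cases hx : a = X
                    · exact Or.inl (hx ▸ hXY)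
                    · exact Or.inr ⟨h, hx⟩
                · rintro (h | ⟨h, _⟩)
                  · exact Or.inl h
                  · exact Or.inr h) z) := by
  intro z
  classical
  have hXY : X ∈ Y := hY (Finset.mem_insert_self X U)
  have hXW : X ∈ W := hW (Finset.mem_insert_self X U)
  set u : Inst V U := fun i =>
    z ⟨i, Finset.mem_union_left _ (hY (Finset.mem_insert_of_mem i.2))⟩ with hu
  set x₀ : V X := z ⟨X, Finset.mem_union_left _ hXY⟩ with hx₀def
  set zY : Inst V Y := fun i => z ⟨i, Finset.mem_union_left _ i.2⟩ with hzY
  set zW : Inst V W := fun i => z ⟨i, Finset.mem_union_right _ i.2⟩ with hzW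
  set zW' : Inst V (W \ {X}) := fun i =>
    z ⟨i, Finset.mem_union_right _ (Finset.mem_sdiff.mp i.2).1⟩ with hzW'
  have hXmem : X ∈ ({X} : Finset ι) := Finset.mem_singleton_self X
  have hAY : Inst.restrict hY zY = Inst.consX X x₀ u := by
    funext i
    obtain ⟨i, hi⟩ := i
    unfold Inst.restrict Inst.consX
    by_cases h : i = X
    · subst h; rw [dif_pos rfl] <;> rfl
    · rw [dif_neg h] <;> rfl
  have hAW : Inst.restrict hW zW = Inst.consX X x₀ u := by
    funext i
    obtain ⟨i, hi⟩ := i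
    unfold Inst.restrict Inst.consX
    by_cases h : i = X
    · subst h; rw [dif_pos rfl] <;> rfl
    · rw [dif_neg h] <;> rfl
  have hB : ∀ x : V X,
      Inst.restrict hW (Inst.extendAt X hXW x zW') = Inst.consX X x u := by
    intro x
    funext i
    obtain ⟨i, hi⟩ := i
    unfold Inst.restrict Inst.extendAt Inst.consX
    by_cases h : i = X
    · subst h; rw [dif_pos rfl] <;> rfl
    · rw [dif_neg h] <;> rfl
  have hx0 : Inst.extendAt X hXW x₀ zW' = zW := by
    funext i
    obtain ⟨i, hi⟩ := i
    unfold Inst.extendAt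
    by_cases h : i = X
    · subst h; rw [dif_pos rfl] <;> rfl
    · rw [dif_neg h] <;> rfl
  let e : Inst V ({X} : Finset ι) ≃ V X :=
    { toFun := fun y => y ⟨X, hXmem⟩
      invFun := fun x i => _root_.cast (congrArg V (Finset.mem_singleton.mp i.2)).symm x
      left_inv := by
        intro y
        funext i
        obtain ⟨i, hi⟩ := i
        have h := Finset.mem_singleton.mp hi
        subst h
        rfl
      right_inv := fun x => rfl }
  have hsum : Factor.sumOut {X} (Finset.singleton_subset_iff.mpr hXW) H zW'
      = ∑ x : V X, H (Inst.extendAt X hXW x zW') := by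
    unfold Factor.sumOut
    refine Fintype.sum_equiv e _ _ ?_
    intro y
    congr 1
    funext i
    obtain ⟨i, hi⟩ := i
    unfold Inst.extendAt
    by_cases h : i = X
    · subst h
      rw [dif_pos hXmem, dif_pos rfl]
      rfl
    · rw [dif_neg (fun hh => h (Finset.mem_singleton.mp hh)), dif_neg h]
  show G zY * H zW
      = G zY * Factor.sumOut {X} (Finset.singleton_subset_iff.mpr hXW) H zW'
  rw [hsum]
  rcases hfun x₀ u with h0 | h1
  · have hG0 : G zY = 0 := by rw [hG, hAY, h0, zero_mul]
    rw [hG0, zero_mul, zero_mul]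
  · have hz : ∀ x : V X, x ≠ x₀ → f (Inst.consX X x u) = 0 := by
      intro x hx
      have hsum1 := hcpt u
      rw [← Finset.add_sum_erase _ _ (Finset.mem_univ x₀), h1] at hsum1
      have herase : ∑ t ∈ Finset.univ.erase x₀, f (Inst.consX X t u) = 0 := by
        linarith
      have hnn : ∀ t ∈ Finset.univ.erase x₀, 0 ≤ f (Inst.consX X t u) := by
        intro t _
        rcases hfun t u with h | h <;> simp [h]
      exact (Finset.sum_eq_zero_iff_of_nonneg hnn).mp herase x
        (Finset.mem_erase.mpr ⟨hx, Finset.mem_univ x⟩)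
    have hHsum : ∑ x : V X, H (Inst.extendAt X hXW x zW') = H zW := by
      rw [Finset.sum_eq_single x₀]
      · rw [hx0]
      · intro x _ hx
        rw [hH, hB x, hz x hx, zero_mul]
      · intro h; exact absurd (Finset.mem_univ x₀) h
    rw [hHsum]
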